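/- Let μ_1,...,μ_n ∈ ℂ be pairwise distinct and r_0 = Σ_{i<j} (1/(μ_i-μ_j)) (Z^i_j ⊗ Z^j_i - Z^j_i ⊗ Z^i_j) with Z^i_j = e^i_j - e^j_j. Then r_0 satisfies the associative classical Yang–Baxter equation: r_0^{13} r_0^{12} - r_0^{12} r_0^{23} + r_0^{23} r_0^{13} = 0. -/

import Mathlib

open Matrix Kronecker BigOperators Finset

noncomputable section


/-- `Z^i_j = e^i_j - e^j_j`. -/
def Zmat (n : ℕ) (i j : Fin n) : Matrix (Fin n) (Fin n) ℂ :=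
  single i j 1 - single j j 1

/-- The skew-symmetric rime r-matrix
`r₀ = Σ_{i<j} (μ_i-μ_j)⁻¹ (Z^i_j ⊗ Z^j_i - Z^j_i ⊗ Z^i_j)` as an operator on ℂⁿ⊗ℂⁿ. -/
def rZero (n : ℕ) (μ : Fin n → ℂ) : Matrix (Fin n × Fin n) (Fin n × Fin n) ℂ :=
  ∑ i : Fin n, ∑ j : Fin n, if i < j then
    (μ i - μ j)⁻¹ • (Zmat n i j ⊗ₖ Zmat n j i - Zmat n j i ⊗ₖ Zmat n i j) else 0

lemma sum_pairs {M : Type*} [AddCommMonoid M] {n : ℕ} (F : Fin n → Fin n → M) :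
    (∑ i : Fin n, ∑ j : Fin n, if i < j then F i j + F j i else 0)
      = ∑ i : Fin n, ∑ j : Fin n, if i ≠ j then F i j else 0 := by
  have h1 : ∀ i j : Fin n, (if i < j then F i j + F j i else 0) =
      (if i < j then F i j else 0) + (if i < j then F j i else 0) := by
    intro i j; split <;> simp
  simp_rw [h1, Finset.sum_add_distrib]
  have h2 : (∑ i : Fin n, ∑ j : Fin n, if i < j then F j i else 0)
      = ∑ i : Fin n, ∑ j : Fin n, if j < i then F i j else 0 := by
    rw [Finset.sum_comm]
  rw [h2, ← Finset.sum_add_distrib]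
  refine Finset.sum_congr rfl fun i _ => ?_
  rw [← Finset.sum_add_distrib]
  refine Finset.sum_congr rfl fun j _ => ?_
  rcases lt_trichotomy i j with h | h | h
  · simp [h, not_lt.mpr h.le, h.ne, h.ne']
  · simp [h]
  · simp [h, not_lt.mpr h.le, h.ne, h.ne']

lemma rZero_eq (n : ℕ) (μ : Fin n → ℂ) :
    rZero n μ = ∑ i : Fin n, ∑ j : Fin n,
      if i ≠ j then (μ i - μ j)⁻¹ • (Zmat n i j ⊗ₖ Zmat n j i) else 0 := by
  rw [← sum_pairs (fun i j => (μ i - μ j)⁻¹ • (Zmat n i j ⊗ₖ Zmat n j i))]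
  unfold rZero
  refine Finset.sum_congr rfl fun i _ => Finset.sum_congr rfl fun j _ => ?_
  split
  · rw [smul_sub, sub_eq_add_neg, ← neg_smul,
      show (μ j - μ i)⁻¹ = -(μ i - μ j)⁻¹ by rw [show μ j - μ i = -(μ i - μ j) by ring, inv_neg]]
  · rfl

def Rfun {n : ℕ} (μ : Fin n → ℂ) (a b d e : Fin n) : ℂ :=
  (μ e - μ d)⁻¹ * (((if a = e then (1:ℂ) else 0) - if a = d then 1 else 0)
    * ((if b = d then (1:ℂ) else 0) - if b = e then 1 else 0))

lemma rZero_apply (n : ℕ) (μ : Fin n → ℂ) (a b d e : Fin n) :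
    rZero n μ (a, b) (d, e) = Rfun μ a b d e := by
  rw [rZero_eq]
  simp only [Matrix.sum_apply,
    apply_ite (fun M : Matrix (Fin n × Fin n) (Fin n × Fin n) ℂ => M (a, b) (d, e)),
    Matrix.zero_apply, Matrix.smul_apply, Matrix.kroneckerMap_apply, smul_eq_mul]
  rw [Finset.sum_eq_single e]
  · rw [Finset.sum_eq_single d]
    · unfold Rfun Zmat
      by_cases hed : e = d
      · simp [hed]
      · simp only [hed, Ne, not_false_iff, if_true, Matrix.single, Matrix.sub_apply,
          Matrix.of_apply]
        simp [and_true, eq_comm]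
    · intro j _ hj
      unfold Zmat
      simp [Matrix.single, Matrix.sub_apply, Ne.symm hj, hj]
    · simp
  · intro i _ hi
    apply Finset.sum_eq_zero
    intro j _
    unfold Zmat
    simp [Matrix.single, hi]
  · simp

lemma sum_pin {n : ℕ} (G : Fin n → ℂ) (u v : Fin n) :
    ∑ x : Fin n, G x * ((if x = u then (1:ℂ) else 0) - if x = v then 1 else 0)
      = G u - G v := by
  simp [mul_sub, Finset.sum_sub_distrib, mul_ite, mul_one, mul_zero, Finset.sum_ite_eq']

lemma scalarYB {n : ℕ} (μ : Fin n → ℂ) (hd : ∀ i j, i ≠ j → μ i ≠ μ j)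
    (a b c d e f : Fin n) :
    (∑ x : Fin n, Rfun μ a c x f * Rfun μ x b d e)
      - (∑ x : Fin n, Rfun μ a b d x * Rfun μ x c e f)
      + (∑ x : Fin n, Rfun μ b c e x * Rfun μ a x d f) = 0 := by
  have e1 : (∑ x : Fin n, Rfun μ a c x f * Rfun μ x b d e)
      = ∑ x : Fin n, (Rfun μ a c x f * ((μ e - μ d)⁻¹
          * ((if b = d then (1:ℂ) else 0) - if b = e then 1 else 0)))
          * ((if x = e then (1:ℂ) else 0) - if x = d then 1 else 0) :=
    Finset.sum_congr rfl fun x _ => by simp only [Rfun]; ring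
  have e2 : (∑ x : Fin n, Rfun μ a b d x * Rfun μ x c e f)
      = ∑ x : Fin n, (Rfun μ a b d x * ((μ f - μ e)⁻¹
          * ((if c = e then (1:ℂ) else 0) - if c = f then 1 else 0)))
          * ((if x = f then (1:ℂ) else 0) - if x = e then 1 else 0) :=
    Finset.sum_congr rfl fun x _ => by simp only [Rfun]; ring
  have e3 : (∑ x : Fin n, Rfun μ b c e x * Rfun μ a x d f)
      = ∑ x : Fin n, (Rfun μ b c e x * ((μ f - μ d)⁻¹
          * ((if a = f then (1:ℂ) else 0) - if a = d then 1 else 0)))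
          * ((if x = d then (1:ℂ) else 0) - if x = f then 1 else 0) :=
    Finset.sum_congr rfl fun x _ => by simp only [Rfun]; ring
  rw [e1, e2, e3, sum_pin, sum_pin, sum_pin]
  simp only [Rfun]
  rw [show (μ d - μ e)⁻¹ = -(μ e - μ d)⁻¹ by
    rw [show μ d - μ e = -(μ e - μ d) by ring, inv_neg]]
  by_cases h1 : d = e
  · subst h1; ring
  by_cases h2 : e = f
  · subst h2; ring
  by_cases h3 : d = f
  · subst h3; ring
  have hQ : (μ e - μ d)⁻¹ * (μ f - μ e)⁻¹ - (μ e - μ d)⁻¹ * (μ f - μ d)⁻¹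
      - (μ f - μ e)⁻¹ * (μ f - μ d)⁻¹ = 0 := by
    have u1 : μ e - μ d ≠ 0 := sub_ne_zero.mpr (hd e d (Ne.symm h1))
    have u2 : μ f - μ e ≠ 0 := sub_ne_zero.mpr (hd f e (Ne.symm h2))
    have u3 : μ f - μ d ≠ 0 := sub_ne_zero.mpr (hd f d (Ne.symm h3))
    field_simp
    ring
  linear_combination (((if a = f then (1:ℂ) else 0) - if a = d then 1 else 0)
    * (((if b = d then (1:ℂ) else 0) - if b = e then 1 else 0))
    * (((if c = e then (1:ℂ) else 0) - if c = f then 1 else 0))) * hQ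

lemma sum_ite_pull {α : Type*} [Fintype α] (P : Prop) [Decidable P] (F : α → ℂ) :
    (∑ y : α, if P then F y else 0) = if P then ∑ y : α, F y else 0 := by
  split <;> simp

/-- `r ⊗ 1` acting on the first two factors of ℂⁿ⊗ℂⁿ⊗ℂⁿ. -/
def op12 (n : ℕ) (r : Matrix (Fin n × Fin n) (Fin n × Fin n) ℂ) :
    Matrix (Fin n × Fin n × Fin n) (Fin n × Fin n × Fin n) ℂ := fun p q =>
  r (p.1, p.2.1) (q.1, q.2.1) * (if p.2.2 = q.2.2 then 1 else 0)

/-- `1 ⊗ r` acting on the last two factors of ℂⁿ⊗ℂⁿ⊗ℂⁿ. -/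
def op23 (n : ℕ) (r : Matrix (Fin n × Fin n) (Fin n × Fin n) ℂ) :
    Matrix (Fin n × Fin n × Fin n) (Fin n × Fin n × Fin n) ℂ := fun p q =>
  r p.2 q.2 * (if p.1 = q.1 then 1 else 0)

/-- `r` acting on the first and third factors of ℂⁿ⊗ℂⁿ⊗ℂⁿ. -/
def op13 (n : ℕ) (r : Matrix (Fin n × Fin n) (Fin n × Fin n) ℂ) :
    Matrix (Fin n × Fin n × Fin n) (Fin n × Fin n × Fin n) ℂ := fun p q =>
  r (p.1, p.2.2) (q.1, q.2.2) * (if p.2.1 = q.2.1 then 1 else 0)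

/-- `r₀` satisfies the associative classical Yang–Baxter equation
`r₀¹³ r₀¹² - r₀¹² r₀²³ + r₀²³ r₀¹³ = 0`. -/
theorem rZero_acYB (n : ℕ) (μ : Fin n → ℂ) (hd : ∀ i j, i ≠ j → μ i ≠ μ j) :
    op13 n (rZero n μ) * op12 n (rZero n μ) - op12 n (rZero n μ) * op23 n (rZero n μ)
      + op23 n (rZero n μ) * op13 n (rZero n μ) = 0 := by
  ext ⟨a, b, c⟩ ⟨d, e, f⟩
  simp only [Matrix.sub_apply, Matrix.add_apply, Matrix.zero_apply, Matrix.mul_apply,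
    op12, op23, op13, Fintype.sum_prod_type, mul_ite, ite_mul, mul_one, one_mul,
    mul_zero, zero_mul, Finset.sum_ite_eq, Finset.sum_ite_eq', Finset.mem_univ, if_true,
    rZero_apply, sum_ite_pull]
  exact scalarYB μ hd a b c d e f
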